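/- Let K be a compact Hausdorff space with no isolated points, φ : K → K a continuous surjection, w ∈ C(K), and T = w·T_φ on C(K). If there exists a point k ∈ Z(w) = {x : w(x) = 0}, i.e., w has a zero, then 0 belongs to the lower semi-Fredholm spectrum of T; concretely, if some zero k of w is not isolated in K, there exist pairwise distinct points k_n with |w(k_n)| ≤ 1/n, and the Dirac measures δ_{k_n} form a singular sequence (no norm-convergent subsequence) in C(K)' with T'δ_{k_n} → 0, so T is not lower semi-Fredholm. -/

import Mathlib

open Filter Topology Set


lemma exists_inj_seq {K : Type*} [TopologicalSpace K] [T2Space K]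
    (hK : ∀ x : K, (nhdsWithin x {x}ᶜ).NeBot)
    (w : C(K, ℂ)) {k : K} (hk : w k = 0) :
    ∃ ks : ℕ → K, Function.Injective ks ∧ ∀ n : ℕ, ‖w (ks n)‖ ≤ 1 / (n + 1) := by
  classical
  have H : ∀ (s : Finset K) (n : ℕ), ∃ x : K, x ∉ s ∧ ‖w x‖ ≤ 1 / (n + 1) := by
    intro s n
    have hpos : (0:ℝ) < 1 / (n + 1) := by positivity
    have hU : IsOpen {x : K | ‖w x‖ < 1 / (n + 1)} := by
      have : Continuous fun x : K => ‖w x‖ := continuous_norm.comp w.continuous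
      exact isOpen_lt this continuous_const
    have hkU : k ∈ {x : K | ‖w x‖ < 1 / (n + 1)} := by simp only [Set.mem_setOf_eq, hk, map_zero, norm_zero]; exact hpos
    haveI := hK k
    have hinf : ({x : K | ‖w x‖ < 1 / (n + 1)}).Infinite :=
      infinite_of_mem_nhds k (hU.mem_nhds hkU)
    obtain ⟨x, hx1, hx2⟩ := (hinf.diff s.finite_toSet).nonempty
    exact ⟨x, hx2, le_of_lt hx1⟩
  choose F hF1 hF2 using H
  let G : ℕ → Finset K := fun n => Nat.rec ∅ (fun m s => insert (F s m) s) n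
  have hGsucc : ∀ n, G (n + 1) = insert (F (G n) n) (G n) := fun n => rfl
  have hGmono : Monotone G := by
    apply monotone_nat_of_le_succ
    intro n
    rw [hGsucc]
    exact Finset.subset_insert _ _
  refine ⟨fun n => F (G n) n, ?_, fun n => hF2 _ _⟩
  have key : ∀ a b, a < b → F (G a) a ≠ F (G b) b := by
    intro a b hab heq
    have h1 : F (G a) a ∈ G (a + 1) := by rw [hGsucc]; exact Finset.mem_insert_self _ _
    have h2 : F (G a) a ∈ G b := hGmono hab h1
    rw [heq] at h2
    exact hF1 (G b) b h2
  intro a b hab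
  rcases lt_trichotomy a b with h | h | h
  · exact absurd hab (key a b h)
  · exact h
  · exact absurd hab.symm (key b a h)


lemma not_fd_of_infinite_zeros {K : Type*} [TopologicalSpace K] [CompactSpace K] [T2Space K]
    (φ : K → K) (w : C(K, ℂ)) (T : C(K, ℂ) →L[ℂ] C(K, ℂ))
    (hT : ∀ (f : C(K, ℂ)) (k : K), T f k = w k * f (φ k))
    (hZ : {x : K | w x = 0}.Infinite) :
    ¬ FiniteDimensional ℂ (C(K, ℂ) ⧸ LinearMap.range (T : C(K, ℂ) →ₗ[ℂ] C(K, ℂ))) := by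
  classical
  intro hFD
  set Q := C(K, ℂ) ⧸ LinearMap.range (T : C(K, ℂ) →ₗ[ℂ] C(K, ℂ))
  let z : ℕ ↪ {x : K | w x = 0} := hZ.natEmbedding
  have hzmem : ∀ j, w (z j) = 0 := fun j => (z j).2
  have hzinj : Function.Injective (fun j => (z j : K)) := fun a b hab =>
    z.injective (Subtype.ext hab)
  have hker : ∀ j, LinearMap.range (T : C(K, ℂ) →ₗ[ℂ] C(K, ℂ)) ≤ LinearMap.ker (ContinuousMap.evalCLM ℂ (z j : K)).toLinearMap := by
    rintro j g ⟨f, rfl⟩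
    simp only [LinearMap.mem_ker, ContinuousLinearMap.coe_coe]
    show T f (z j : K) = 0
    rw [hT, hzmem, zero_mul]
  let lam : ℕ → Module.Dual ℂ Q := fun j =>
    Submodule.liftQ (LinearMap.range (T : C(K, ℂ) →ₗ[ℂ] C(K, ℂ))) _ (hker j)
  have hLI : LinearIndependent ℂ lam := by
    rw [linearIndependent_iff']
    intro s c hsum i0 hi0
    set t : Finset K := (s.erase i0).image (fun j => (z j : K)) with ht
    have hclosed : IsClosed (t : Set K) := t.finite_toSet.isClosed
    have hdisj : Disjoint (t : Set K) ({(z i0 : K)} : Set K) := by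
      rw [Set.disjoint_singleton_right]
      intro hmem
      rw [Finset.mem_coe, Finset.mem_image] at hmem
      obtain ⟨j, hj, hjz⟩ := hmem
      exact (Finset.ne_of_mem_erase hj) (hzinj hjz)
    obtain ⟨f, hf0, hf1, _⟩ := exists_continuous_zero_one_of_isClosed hclosed
      isClosed_singleton hdisj
    let fc : C(K, ℂ) := ⟨fun x => (f x : ℂ), Complex.continuous_ofReal.comp f.continuous⟩
    have happ := congrArg (fun (ψ : Module.Dual ℂ Q) => ψ (Submodule.Quotient.mk fc)) hsum
    simp only [LinearMap.coe_sum, Finset.sum_apply, LinearMap.smul_apply,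
      LinearMap.zero_apply, smul_eq_mul] at happ
    have hval : ∀ j ∈ s, lam j (Submodule.Quotient.mk fc) = (f (z j : K) : ℂ) := by
      intro j _
      rfl
    rw [Finset.sum_congr rfl (fun j hj => by rw [hval j hj])] at happ
    have hsplit : ∀ j ∈ s, j ≠ i0 → c j * (f (z j : K) : ℂ) = 0 := by
      intro j hj hne
      have : (z j : K) ∈ t := Finset.mem_image_of_mem _ (Finset.mem_erase.mpr ⟨hne, hj⟩)
      rw [hf0 this]
      simp
    rw [Finset.sum_eq_single i0 hsplit (fun h => absurd hi0 h)] at happ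
    rw [hf1 rfl] at happ
    simpa using happ
  exact Module.Finite.not_linearIndependent_of_infinite lam hLI


lemma not_fd_of_finite_zeros {K : Type*} [TopologicalSpace K] [CompactSpace K] [T2Space K]
    (hK : ∀ x : K, (nhdsWithin x {x}ᶜ).NeBot)
    (φ : K → K) (w : C(K, ℂ)) (T : C(K, ℂ) →L[ℂ] C(K, ℂ))
    (hT : ∀ (f : C(K, ℂ)) (k : K), T f k = w k * f (φ k))
    {k : K} (hk : w k = 0)
    (hZ : {x : K | w x = 0}.Finite) :
    ¬ FiniteDimensional ℂ (C(K, ℂ) ⧸ LinearMap.range (T : C(K, ℂ) →ₗ[ℂ] C(K, ℂ))) := by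
  classical
  intro hFD
  -- exponents
  set α : ℕ → ℝ := fun j => 1 - 1 / (j + 2) with hα
  have hα_pos : ∀ j, 0 < α j := by
    intro j
    have h1 : (1 : ℝ) / (j + 2) < 1 := by
      rw [div_lt_one (by positivity)]
      have : (0:ℝ) < (j:ℝ) + 1 := by positivity
      linarith
    simp only [hα]; linarith
  have hα_lt_one : ∀ j, α j < 1 := by
    intro j
    have : (0:ℝ) < 1 / (j + 2) := by positivity
    simp only [hα]; linarith
  have hα_mono : StrictMono α := by
    intro i j hij
    simp only [hα]
    have h2 : (1:ℝ) / (j + 2) < 1 / (i + 2) := by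
      apply one_div_lt_one_div_of_lt (by positivity)
      have : (i:ℝ) < j := by exact_mod_cast hij
      linarith
    linarith
  -- the functions |w|^(α j)
  have hcont : ∀ j, Continuous fun x : K => ((‖w x‖ ^ (α j) : ℝ) : ℂ) := by
    intro j
    apply Complex.continuous_ofReal.comp
    rw [continuous_iff_continuousAt]
    intro x
    exact (Real.continuousAt_rpow_const _ _ (Or.inr (hα_pos j).le)).comp
      ((continuous_norm.comp w.continuous).continuousAt)
  set hh : ℕ → C(K, ℂ) := fun j => ⟨fun x => ((‖w x‖ ^ (α j) : ℝ) : ℂ), hcont j⟩ with hhh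
  -- the filter of approach to k through nonzeros of w
  set L : Filter K := nhdsWithin k {x | w x ≠ 0} with hL
  haveI hLne : L.NeBot := by
    haveI := hK k
    have h1 : ({x : K | w x = 0} \ {k})ᶜ ∈ nhds k := by
      apply IsOpen.mem_nhds
      · exact ((hZ.diff).isClosed).isOpen_compl
      · simp [hk]
    have h2 : nhdsWithin k ({k}ᶜ ∩ ({x : K | w x = 0} \ {k})ᶜ) = nhdsWithin k {k}ᶜ :=
      nhdsWithin_inter_of_mem' (mem_nhdsWithin_of_mem_nhds h1)
    have h3 : ({k}ᶜ ∩ ({x : K | w x = 0} \ {k})ᶜ : Set K) ⊆ {x | w x ≠ 0} := by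
      rintro x ⟨hx1, hx2⟩
      simp only [Set.mem_compl_iff, Set.mem_diff, Set.mem_setOf_eq, not_and, not_not] at hx2 ⊢
      intro hwx
      exact hx1 (hx2 hwx)
    have h4 : (nhdsWithin k ({k}ᶜ ∩ ({x : K | w x = 0} \ {k})ᶜ)).NeBot := by
      rw [h2]; exact hK k
    exact h4.mono (nhdsWithin_mono k h3)
  have hne_ev : ∀ᶠ x in L, w x ≠ 0 := eventually_mem_nhdsWithin
  have habs : Tendsto (fun x => ‖w x‖) L (nhds 0) := by
    have := ((continuous_norm.comp w.continuous).tendsto k).mono_left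
      (nhdsWithin_le_nhds (s := {x | w x ≠ 0}))
    simpa [hk, Function.comp_def] using this
  have hrpow0 : ∀ {β : ℝ}, 0 < β →
      Tendsto (fun x => ‖w x‖ ^ β) L (nhds 0) := by
    intro β hβ
    have hc : ContinuousAt (fun t : ℝ => t ^ β) 0 :=
      Real.continuousAt_rpow_const _ _ (Or.inr hβ.le)
    have := hc.tendsto.comp habs
    simpa [Real.zero_rpow (ne_of_gt hβ), Function.comp_def] using this
  -- the key independence computation
  have key : ∀ s : Finset ℕ, ∀ c : ℕ → ℂ,
      (∑ j ∈ s, c j • hh j) ∈ LinearMap.range (T : C(K, ℂ) →ₗ[ℂ] C(K, ℂ)) → ∀ j ∈ s, c j = 0 := by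
    intro s
    induction s using Finset.strongInduction with
    | _ s ih =>
      intro c hmem j hj
      have hne : s.Nonempty := ⟨j, hj⟩
      set j0 := s.min' hne with hj0
      obtain ⟨f, hf⟩ := hmem
      have hpt : ∀ x : K, w x * f (φ x) = ∑ i ∈ s, c i * ((‖w x‖ ^ (α i) : ℝ) : ℂ) := by
        intro x
        have := congrFun (congrArg (fun g : C(K, ℂ) => (g : K → ℂ)) hf) x
        simp only [ContinuousMap.coe_sum, Finset.sum_apply, ContinuousMap.coe_smul,
          Pi.smul_apply, smul_eq_mul, hhh, ContinuousMap.coe_mk] at this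
        rw [← hT f x]
        exact this
      set q : K → ℂ := fun x => ∑ i ∈ s, c i * ((‖w x‖ ^ (α i - α j0) : ℝ) : ℂ) with hq
      -- Claim A : q tends to c j0
      have claimA : Tendsto q L (nhds (c j0)) := by
        have : Tendsto q L (nhds (∑ i ∈ s, if i = j0 then c j0 else 0)) := by
          apply tendsto_finset_sum
          intro i hi
          rcases eq_or_ne i j0 with rfl | hne2
          · simp only [if_pos rfl, sub_self]
            simpa [Real.rpow_zero] using tendsto_const_nhds (α := ℂ) (f := L)
          · simp only [if_neg hne2]
            have hβ : 0 < α i - α j0 := by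
              have : j0 < i := lt_of_le_of_ne (s.min'_le i hi) (Ne.symm hne2)
              have := hα_mono this
              linarith
            have h1 := (Complex.continuous_ofReal.tendsto 0).comp (hrpow0 hβ)
            have h2 : Tendsto (fun x => c i * ((‖w x‖ ^ (α i - α j0) : ℝ) : ℂ)) L
                (nhds (c i * ((0:ℝ):ℂ))) := Tendsto.const_mul _ (by simpa [Function.comp_def] using h1)
            simpa using h2
        simpa [Finset.sum_ite_eq' s j0 (fun _ => c j0), (show j0 ∈ s from s.min'_mem hne)] using this
      -- Claim B : eventual formula for q
      have claimB : ∀ᶠ x in L, q x =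
          (w x * f (φ x)) / ((‖w x‖ ^ (α j0) : ℝ) : ℂ) := by
        filter_upwards [hne_ev] with x hx
        have hpos : 0 < ‖w x‖ := norm_pos_iff.mpr hx
        rw [hq, hpt x, Finset.sum_div]
        apply Finset.sum_congr rfl
        intro i _
        rw [Real.rpow_sub hpos, Complex.ofReal_div, mul_div_assoc]
      -- Claim C : eventual bound on |q|
      have claimC : ∀ᶠ x in L, ‖q x‖ ≤
          ‖w x‖ ^ (1 - α j0) * ‖f‖ := by
        filter_upwards [claimB, hne_ev] with x hB hx
        have hpos : 0 < ‖w x‖ := norm_pos_iff.mpr hx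
        have hrp : (0:ℝ) < ‖w x‖ ^ (α j0) := Real.rpow_pos_of_pos hpos _
        rw [hB, norm_div, norm_mul, Complex.norm_real, Real.norm_eq_abs, abs_of_pos hrp, div_le_iff₀ hrp]
        have h2 : ‖w x‖ ^ (1 - α j0) * ‖f‖ * ‖w x‖ ^ (α j0)
            = ‖w x‖ * ‖f‖ := by
          rw [mul_right_comm, ← Real.rpow_add hpos, sub_add_cancel, Real.rpow_one]
        rw [h2]
        exact mul_le_mul_of_nonneg_left (ContinuousMap.norm_coe_le_norm f (φ x)) hpos.le
      have claimD : Tendsto (fun x => ‖w x‖ ^ (1 - α j0) * ‖f‖) L (nhds 0) := by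
        have := (hrpow0 (β := 1 - α j0) (by linarith [hα_lt_one j0])).mul_const ‖f‖
        simpa using this
      have hcj0 : c j0 = 0 := by
        have htends : Tendsto (fun x => ‖q x‖) L (nhds (‖c j0‖)) :=
          (continuous_norm.tendsto _).comp claimA
        have hle : ‖c j0‖ ≤ 0 :=
          le_of_tendsto_of_tendsto htends claimD claimC
        have := le_antisymm hle (norm_nonneg _)
        exact norm_eq_zero.mp this
      rcases eq_or_ne j j0 with rfl | hne2
      · exact hcj0
      · apply ih (s.erase j0) (Finset.erase_ssubset (s.min'_mem hne)) c _ j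
          (Finset.mem_erase.mpr ⟨hne2, hj⟩)
        have : (∑ i ∈ s.erase j0, c i • hh i) = ∑ i ∈ s, c i • hh i := by
          apply Finset.sum_erase
          rw [hcj0, zero_smul]
        rw [this]
        exact ⟨f, hf⟩
  -- conclude : independent ℕ-family in the quotient
  have hLI : LinearIndependent ℂ (fun j => (Submodule.Quotient.mk (hh j) :
      C(K, ℂ) ⧸ LinearMap.range (T : C(K, ℂ) →ₗ[ℂ] C(K, ℂ)))) := by
    rw [linearIndependent_iff']
    intro s c hsum i hi
    apply key s c _ i hi
    apply (Submodule.Quotient.mk_eq_zero _).mp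
    have hmk : (Submodule.Quotient.mk (∑ j ∈ s, c j • hh j) :
        C(K, ℂ) ⧸ LinearMap.range (T : C(K, ℂ) →ₗ[ℂ] C(K, ℂ))) = ∑ j ∈ s, c j • (Submodule.Quotient.mk (hh j)) := by
      rw [← Submodule.mkQ_apply, map_sum]
      simp
    rw [hmk, hsum]
  exact Module.Finite.not_linearIndependent_of_infinite _ hLI


lemma eval_tendsto_zero {K : Type*} [TopologicalSpace K] [CompactSpace K]
    (φ : K → K) (w : C(K, ℂ)) (T : C(K, ℂ) →L[ℂ] C(K, ℂ))
    (hT : ∀ (f : C(K, ℂ)) (k : K), T f k = w k * f (φ k))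
    (ks : ℕ → K) (hks : ∀ n : ℕ, ‖w (ks n)‖ ≤ 1 / (n + 1)) :
    Tendsto (fun n => (ContinuousMap.evalCLM ℂ (ks n)).comp T) atTop (nhds 0) := by
  apply squeeze_zero_norm (a := fun n : ℕ => 1 / ((n : ℝ) + 1))
  · intro n
    apply ContinuousLinearMap.opNorm_le_bound _ (by positivity)
    intro f
    have h1 : ((ContinuousMap.evalCLM ℂ (ks n)).comp T) f = T f (ks n) := rfl
    rw [h1, hT]
    rw [norm_mul]
    apply mul_le_mul (hks n) (ContinuousMap.norm_coe_le_norm f (φ (ks n)))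
      (norm_nonneg _) (by positivity)
  · exact tendsto_one_div_add_atTop_nhds_zero_nat

lemma one_le_norm_sub_eval {K : Type*} [TopologicalSpace K] [CompactSpace K] [T2Space K]
    {a b : K} (hab : a ≠ b) :
    (1 : ℝ) ≤ ‖(ContinuousMap.evalCLM ℂ a - ContinuousMap.evalCLM ℂ b : C(K, ℂ) →L[ℂ] ℂ)‖ := by
  set S : C(K, ℂ) →L[ℂ] ℂ := ContinuousMap.evalCLM ℂ a - ContinuousMap.evalCLM ℂ b with hS
  obtain ⟨f, hf0, hf1, hf01⟩ := exists_continuous_zero_one_of_isClosed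
    (isClosed_singleton (x := b)) (isClosed_singleton (x := a))
    (by rw [Set.disjoint_singleton]; exact hab.symm)
  let fc : C(K, ℂ) := ⟨fun x => (f x : ℂ), Complex.continuous_ofReal.comp f.continuous⟩
  have hfc : ‖fc‖ ≤ 1 := by
    apply (ContinuousMap.norm_le _ zero_le_one).mpr
    intro x
    have := hf01 x
    simp only [Set.mem_Icc] at this
    simp only [fc, ContinuousMap.coe_mk, Complex.norm_real, Real.norm_eq_abs]
    rw [abs_le]
    exact ⟨by linarith [this.1], this.2⟩
  have happ : S fc = 1 := by
    rw [hS]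
    rw [ContinuousLinearMap.sub_apply]
    have ha : (ContinuousMap.evalCLM ℂ a : C(K, ℂ) →L[ℂ] ℂ) fc = ((f a : ℂ)) := rfl
    have hb : (ContinuousMap.evalCLM ℂ b : C(K, ℂ) →L[ℂ] ℂ) fc = ((f b : ℂ)) := rfl
    rw [ha, hb, hf1 rfl, hf0 rfl]
    norm_num
  calc (1 : ℝ) = ‖S fc‖ := by rw [happ]; simp
    _ ≤ ‖S‖ * ‖fc‖ := ContinuousLinearMap.le_opNorm _ _
    _ ≤ ‖S‖ * 1 := mul_le_mul_of_nonneg_left hfc (norm_nonneg _)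
    _ = ‖S‖ := mul_one _

/-- A bounded operator is lower semi-Fredholm if its range has finite codimension. -/
def LowerSemiFredholm {X Y : Type*} [NormedAddCommGroup X] [NormedSpace ℂ X]
    [NormedAddCommGroup Y] [NormedSpace ℂ Y] (S : X →L[ℂ] Y) : Prop :=
  FiniteDimensional ℂ (Y ⧸ LinearMap.range (S : X →ₗ[ℂ] Y))

/-- If `K` has no isolated points and the weight `w` has a zero, then
`0` lies in the lower semi-Fredholm spectrum of `T = w·T_φ`: there are pairwise
distinct points `k_n` with `|w(k_n)| ≤ 1/n`, the Dirac functionals `δ_{k_n}` form a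
singular sequence (no norm-convergent subsequence) with `T'δ_{k_n} → 0`, and `T` is
not lower semi-Fredholm. -/
theorem stmt12 {K : Type*} [TopologicalSpace K] [CompactSpace K] [T2Space K]
    (hK : ∀ x : K, (nhdsWithin x {x}ᶜ).NeBot)
    (φ : K → K) (hφc : Continuous φ) (hφs : Function.Surjective φ)
    (w : C(K, ℂ)) (hzero : ∃ k : K, w k = 0)
    (T : C(K, ℂ) →L[ℂ] C(K, ℂ))
    (hT : ∀ (f : C(K, ℂ)) (k : K), T f k = w k * f (φ k)) :
    (∃ ks : ℕ → K, Function.Injective ks ∧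
      (∀ n : ℕ, ‖w (ks n)‖ ≤ 1 / (n + 1)) ∧
      Tendsto (fun n => (ContinuousMap.evalCLM ℂ (ks n)).comp T) atTop (nhds 0) ∧
      (∀ g : ℕ → ℕ, StrictMono g →
        ¬ ∃ μ : C(K, ℂ) →L[ℂ] ℂ,
          Tendsto (fun n => ContinuousMap.evalCLM ℂ (ks (g n))) atTop (nhds μ))) ∧
    ¬ LowerSemiFredholm T := by
  obtain ⟨k, hk⟩ := hzero
  obtain ⟨ks, hinj, hbound⟩ := exists_inj_seq hK w hk
  constructor
  · refine ⟨ks, hinj, hbound, eval_tendsto_zero φ w T hT ks hbound, ?_⟩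
    rintro g hg ⟨μ, hμ⟩
    have hc : CauchySeq (fun n => ContinuousMap.evalCLM ℂ (ks (g n)) : ℕ → C(K, ℂ) →L[ℂ] ℂ) :=
      hμ.cauchySeq
    obtain ⟨N, hN⟩ := Metric.cauchySeq_iff'.mp hc 1 one_pos
    have hdist := hN (N + 1) (Nat.le_succ N)
    rw [dist_eq_norm] at hdist
    have hne : ks (g (N + 1)) ≠ ks (g N) := by
      intro h
      have := hg.injective (hinj h)
      omega
    exact absurd hdist (not_lt.mpr (one_le_norm_sub_eval hne))
  · intro hFD
    rcases Set.finite_or_infinite {x : K | w x = 0} with hfin | hinf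
    · exact not_fd_of_finite_zeros hK φ w T hT hk hfin hFD
    · exact not_fd_of_infinite_zeros φ w T hT hinf hFD
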